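/- (Theorem 2, quantitative version.) Let Y and X_0, X_1, …, X_n be jointly distributed random variables, with each X_k taking values in a common finite set 𝒳, and suppose |L(y,a)| ≤ M for all y and a and I_{χ²}(Y; X_{k+1} | X_k) ≤ ε² for every k < n. Let Θ₁ and Θ₂ be random variables taking values in {0,1,…,n}, each independent of (Y, X_0, …, X_n), with Θ₁ ≤_st Θ₂. Then H_L(Y | X_{Θ₁}, Θ₁) ≤ H_L(Y | X_{Θ₂}, Θ₂) + 2Mε·|𝒳|·E[Θ₂]. -/

import Mathlib

open Finset

open Classical in
/-- Probability of an event under a pmf `p` on a finite sample space. -/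
noncomputable def pr {Ω : Type*} [Fintype Ω] (p : Ω → ℝ) (E : Ω → Prop) : ℝ :=
  ∑ ω, if E ω then p ω else 0

/-- Conditional distribution of a random variable `Y` given an event `E`. -/
noncomputable def condDist {Ω 𝒴 : Type*} [Fintype Ω] (p : Ω → ℝ) (Y : Ω → 𝒴)
    (E : Ω → Prop) : 𝒴 → ℝ :=
  fun y => pr p (fun ω => Y ω = y ∧ E ω) / pr p E

/-- Neyman's χ²-divergence `D_{χ²}(P‖Q)`.  (In Lean, `x / 0 = 0`, which realizes
the convention `0²/0 = 0` under absolute continuity.) -/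
noncomputable def chiSqDiv {𝒴 : Type*} [Fintype 𝒴] (P Q : 𝒴 → ℝ) : ℝ :=
  ∑ y, (P y - Q y) ^ 2 / Q y

/-- χ²-conditional mutual information `I_{χ²}(Y;Z|X)`. -/
noncomputable def chiSqCMI {Ω 𝒳 𝒴 𝒵 : Type*} [Fintype Ω] [Fintype 𝒳] [Fintype 𝒴]
    [Fintype 𝒵] (p : Ω → ℝ) (Y : Ω → 𝒴) (Z : Ω → 𝒵) (X : Ω → 𝒳) : ℝ :=
  ∑ x, ∑ z, pr p (fun ω => X ω = x ∧ Z ω = z) *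
    chiSqDiv (condDist p Y (fun ω => X ω = x ∧ Z ω = z))
      (condDist p Y (fun ω => X ω = x))

/-- Expected loss `E_{Y∼P}[L(Y,a)]`. -/
noncomputable def expLoss {𝒴 𝒜 : Type*} [Fintype 𝒴] (L : 𝒴 → 𝒜 → ℝ) (P : 𝒴 → ℝ)
    (a : 𝒜) : ℝ :=
  ∑ y, P y * L y a

/-- The `L`-entropy `H_L(P) = min_{a∈𝒜} E_{Y∼P}[L(Y,a)]`. -/
noncomputable def Lentropy {𝒴 𝒜 : Type*} [Fintype 𝒴] (L : 𝒴 → 𝒜 → ℝ) (P : 𝒴 → ℝ) : ℝ :=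
  ⨅ a : 𝒜, expLoss L P a

/-- The `L`-conditional entropy `H_L(Y|X) = Σ_x P_X(x) H_L(P_{Y|X=x})`. -/
noncomputable def LcondEntropy {Ω 𝒳 𝒴 𝒜 : Type*} [Fintype Ω] [Fintype 𝒳] [Fintype 𝒴]
    (L : 𝒴 → 𝒜 → ℝ) (p : Ω → ℝ) (Y : Ω → 𝒴) (X : Ω → 𝒳) : ℝ :=
  ∑ x, pr p (fun ω => X ω = x) * Lentropy L (condDist p Y (fun ω => X ω = x))

/-- The freshness-aware conditional entropy `H_L(Y | X_Θ, Θ)` for an AoI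
random variable `Θ` taking values in `{0,…,n}`. -/
noncomputable def LcondEntropyAoI {Ω 𝒳 𝒴 𝒜 : Type*} [Fintype Ω] [Fintype 𝒳] [Fintype 𝒴]
    (L : 𝒴 → 𝒜 → ℝ) (p : Ω → ℝ) (Y : Ω → 𝒴) (X : ℕ → Ω → 𝒳) (Θ : Ω → ℕ) (n : ℕ) : ℝ :=
  ∑ θ ∈ Finset.range (n + 1), ∑ x,
    pr p (fun ω => Θ ω = θ ∧ X θ ω = x) *
      Lentropy L (condDist p Y (fun ω => X θ ω = x ∧ Θ ω = θ))

section PrLemmas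
variable {Ω : Type*} [Fintype Ω] {p : Ω → ℝ}

lemma pr_nonneg (hp : ∀ ω, 0 ≤ p ω) (E : Ω → Prop) : 0 ≤ pr p E := by
  classical
  refine Finset.sum_nonneg fun ω _ => ?_
  split <;> simp [hp ω]

lemma pr_congr {E F : Ω → Prop} (h : ∀ ω, E ω ↔ F ω) : pr p E = pr p F := by
  unfold pr
  exact Finset.sum_congr rfl fun ω _ => by rw [iff_iff_eq.mp (h ω)]

lemma pr_mono (hp : ∀ ω, 0 ≤ p ω) {E F : Ω → Prop} (h : ∀ ω, E ω → F ω) :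
    pr p E ≤ pr p F := by
  classical
  refine Finset.sum_le_sum fun ω _ => ?_
  by_cases hE : E ω
  · simp [hE, h ω hE]
  · simp only [if_neg hE]; split <;> simp [hp ω]

lemma pr_false : pr p (fun _ => False) = 0 := by simp [pr]

lemma pr_fiber {α : Type*} [Fintype α] (E : Ω → Prop) (f : Ω → α) :
    pr p E = ∑ x, pr p (fun ω => E ω ∧ f ω = x) := by
  classical
  unfold pr
  rw [Finset.sum_comm]
  refine Finset.sum_congr rfl fun ω _ => ?_
  by_cases hE : E ω
  · simp [hE]
  · simp [hE]

lemma pr_fiber_nat (E : Ω → Prop) (Θ : Ω → ℕ) (n : ℕ) (hΘ : ∀ ω, Θ ω ≤ n) :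
    pr p E = ∑ θ ∈ range (n + 1), pr p (fun ω => E ω ∧ Θ ω = θ) := by
  classical
  unfold pr
  rw [Finset.sum_comm]
  refine Finset.sum_congr rfl fun ω _ => ?_
  by_cases hE : E ω
  · simp only [hE, true_and]
    rw [Finset.sum_ite_eq (range (n+1)) (Θ ω) (fun _ => p ω)]
    simp [Nat.lt_succ_iff, hΘ ω]
  · simp [hE]

lemma pr_true (hsum : ∑ ω, p ω = 1) : pr p (fun _ => True) = 1 := by
  simp [pr, hsum]

lemma pr_eq_zero_of_le (hp : ∀ ω, 0 ≤ p ω) {E F : Ω → Prop}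
    (h : ∀ ω, E ω → F ω) (hF : pr p F = 0) : pr p E = 0 :=
  le_antisymm (hF ▸ pr_mono hp h) (pr_nonneg hp E)

end PrLemmas

section LentropyLemmas
variable {𝒴 𝒜 : Type*} [Fintype 𝒴] [Fintype 𝒜] [Nonempty 𝒜] (L : 𝒴 → 𝒜 → ℝ)

lemma Lentropy_le (P : 𝒴 → ℝ) (a : 𝒜) : Lentropy L P ≤ expLoss L P a :=
  ciInf_le ((Set.finite_range _).bddBelow) a

lemma exists_Lentropy_eq (P : 𝒴 → ℝ) : ∃ a : 𝒜, Lentropy L P = expLoss L P a := by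
  obtain ⟨a, ha⟩ := Finite.exists_min (fun a : 𝒜 => expLoss L P a)
  exact ⟨a, le_antisymm (Lentropy_le L P a) (le_ciInf ha)⟩

lemma Lentropy_smul (c : ℝ) (hc : 0 ≤ c) (P : 𝒴 → ℝ) :
    Lentropy L (fun y => c * P y) = c * Lentropy L P := by
  have hexp : ∀ a, expLoss L (fun y => c * P y) a = c * expLoss L P a := by
    intro a; simp [expLoss, Finset.mul_sum, mul_assoc]
  obtain ⟨a, ha⟩ := exists_Lentropy_eq L P
  obtain ⟨b, hb⟩ := exists_Lentropy_eq L (fun y => c * P y)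
  refine le_antisymm ?_ ?_
  · calc Lentropy L (fun y => c * P y) ≤ expLoss L (fun y => c * P y) a := Lentropy_le L _ a
      _ = c * expLoss L P a := hexp a
      _ = c * Lentropy L P := by rw [← ha]
  · calc c * Lentropy L P ≤ c * expLoss L P b :=
        mul_le_mul_of_nonneg_left (Lentropy_le L P b) hc
      _ = expLoss L (fun y => c * P y) b := (hexp b).symm
      _ = Lentropy L (fun y => c * P y) := hb.symm

lemma Lentropy_superadd {ι : Type*} (s : Finset ι) (P : ι → 𝒴 → ℝ) :
    ∑ i ∈ s, Lentropy L (P i) ≤ Lentropy L (fun y => ∑ i ∈ s, P i y) := by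
  refine le_ciInf fun a => ?_
  have : expLoss L (fun y => ∑ i ∈ s, P i y) a = ∑ i ∈ s, expLoss L (P i) a := by
    simp [expLoss, Finset.sum_mul]; rw [Finset.sum_comm]
  rw [this]
  exact Finset.sum_le_sum fun i _ => Lentropy_le L (P i) a

lemma Lentropy_lipschitz (M : ℝ) (hL : ∀ y a, |L y a| ≤ M) (P Q : 𝒴 → ℝ) :
    Lentropy L P ≤ Lentropy L Q + M * ∑ y, |P y - Q y| := by
  obtain ⟨a, ha⟩ := exists_Lentropy_eq L Q
  have h1 : expLoss L P a = expLoss L Q a + ∑ y, (P y - Q y) * L y a := by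
    simp [expLoss, ← Finset.sum_add_distrib]; congr 1; ext y; ring
  have h2 : ∑ y, (P y - Q y) * L y a ≤ M * ∑ y, |P y - Q y| := by
    rw [Finset.mul_sum]
    refine Finset.sum_le_sum fun y _ => ?_
    calc (P y - Q y) * L y a ≤ |(P y - Q y) * L y a| := le_abs_self _
      _ = |P y - Q y| * |L y a| := abs_mul _ _
      _ ≤ |P y - Q y| * M := mul_le_mul_of_nonneg_left (hL y a) (abs_nonneg _)
      _ = M * |P y - Q y| := mul_comm _ _
  calc Lentropy L P ≤ expLoss L P a := Lentropy_le L P a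
    _ = expLoss L Q a + ∑ y, (P y - Q y) * L y a := h1
    _ ≤ Lentropy L Q + M * ∑ y, |P y - Q y| := by rw [ha]; exact add_le_add_right h2 _

lemma Lentropy_condDist {Ω : Type*} [Fintype Ω] (p : Ω → ℝ) (hp : ∀ ω, 0 ≤ p ω)
    (Y : Ω → 𝒴) (E : Ω → Prop) :
    pr p E * Lentropy L (condDist p Y E)
      = Lentropy L (fun y => pr p (fun ω => Y ω = y ∧ E ω)) := by
  rw [← Lentropy_smul L (pr p E) (pr_nonneg hp E)]
  congr 1
  ext y
  by_cases h : pr p E = 0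
  · have : pr p (fun ω => Y ω = y ∧ E ω) = 0 :=
      pr_eq_zero_of_le hp (fun ω hw => hw.2) h
    simp [condDist, this, h]
  · show pr p E * (pr p (fun ω => Y ω = y ∧ E ω) / pr p E) = _
    field_simp

end LentropyLemmas

section StepLemma
variable {Ω 𝒳 𝒴 𝒜 : Type*} [Fintype Ω] [Fintype 𝒳] [Fintype 𝒴] [Fintype 𝒜] [Nonempty 𝒜]

lemma condDist_nonneg {p : Ω → ℝ} (hp : ∀ ω, 0 ≤ p ω) (Y : Ω → 𝒴) (E : Ω → Prop) (y : 𝒴) :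
    0 ≤ condDist p Y E y :=
  div_nonneg (pr_nonneg hp _) (pr_nonneg hp _)

lemma step_lemma (L : 𝒴 → 𝒜 → ℝ) (M : ℝ) (hL : ∀ y a, |L y a| ≤ M) (hM : 0 ≤ M)
    (p : Ω → ℝ) (hp : ∀ ω, 0 ≤ p ω) (hsum : ∑ ω, p ω = 1)
    (Y : Ω → 𝒴) (W Z : Ω → 𝒳) (ε : ℝ) (hε : 0 ≤ ε)
    (hCMI : chiSqCMI p Y Z W ≤ ε ^ 2) :
    ∑ x, Lentropy L (fun y => pr p (fun ω => Y ω = y ∧ W ω = x))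
      ≤ (∑ z, Lentropy L (fun y => pr p (fun ω => Y ω = y ∧ Z ω = z))) + M * ε := by
  classical
  set A2 : 𝒳 → 𝒳 → ℝ := fun x z => pr p (fun ω => W ω = x ∧ Z ω = z) with hA2def
  set Qx : 𝒳 → 𝒴 → ℝ := fun x => condDist p Y (fun ω => W ω = x) with hQxdef
  set Qxz : 𝒳 → 𝒳 → 𝒴 → ℝ := fun x z => condDist p Y (fun ω => W ω = x ∧ Z ω = z)
    with hQxzdef
  set T : 𝒳 → 𝒳 → ℝ := fun x z => ∑ y, |Qxz x z y - Qx x y| with hTdef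
  set D : 𝒳 → 𝒳 → ℝ := fun x z => chiSqDiv (Qxz x z) (Qx x) with hDdef
  have hA2nn : ∀ x z, 0 ≤ A2 x z := fun x z => pr_nonneg hp _
  have hTnn : ∀ x z, 0 ≤ T x z :=
    fun x z => Finset.sum_nonneg fun y _ => abs_nonneg _
  -- Step A
  have stepA : ∑ x, Lentropy L (fun y => pr p (fun ω => Y ω = y ∧ W ω = x))
      = ∑ x, ∑ z, A2 x z * Lentropy L (Qx x) := by
    refine Finset.sum_congr rfl fun x _ => ?_
    rw [← Lentropy_condDist L p hp Y (fun ω => W ω = x)]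
    rw [pr_fiber (fun ω => W ω = x) Z, Finset.sum_mul]
  -- Step B
  have stepB : ∀ x z, A2 x z * Lentropy L (Qx x)
      ≤ A2 x z * Lentropy L (Qxz x z) + M * (A2 x z * T x z) := by
    intro x z
    have hlip : Lentropy L (Qx x) ≤ Lentropy L (Qxz x z) + M * T x z := by
      have := Lentropy_lipschitz L M hL (Qx x) (Qxz x z)
      have habs : ∑ y, |Qx x y - Qxz x z y| = T x z := by
        refine Finset.sum_congr rfl fun y _ => abs_sub_comm _ _
      rw [habs] at this; exact this
    calc A2 x z * Lentropy L (Qx x) ≤ A2 x z * (Lentropy L (Qxz x z) + M * T x z) :=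
          mul_le_mul_of_nonneg_left hlip (hA2nn x z)
      _ = A2 x z * Lentropy L (Qxz x z) + M * (A2 x z * T x z) := by ring
  -- Step C
  have stepC : ∑ x, ∑ z, A2 x z * Lentropy L (Qxz x z)
      ≤ ∑ z, Lentropy L (fun y => pr p (fun ω => Y ω = y ∧ Z ω = z)) := by
    have hterm : ∀ x z, A2 x z * Lentropy L (Qxz x z)
        = Lentropy L (fun y => pr p (fun ω => Y ω = y ∧ (W ω = x ∧ Z ω = z))) :=
      fun x z => Lentropy_condDist L p hp Y _
    simp_rw [hterm]
    rw [Finset.sum_comm]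
    refine Finset.sum_le_sum fun z _ => ?_
    have hdecomp : (fun y => pr p (fun ω => Y ω = y ∧ Z ω = z))
        = fun y => ∑ x, pr p (fun ω => Y ω = y ∧ (W ω = x ∧ Z ω = z)) := by
      ext y
      rw [pr_fiber (fun ω => Y ω = y ∧ Z ω = z) W]
      exact Finset.sum_congr rfl fun x _ => pr_congr fun ω => by tauto
    rw [hdecomp]
    exact Lentropy_superadd L Finset.univ _
  -- Step D
  have hsumA2 : ∑ x, ∑ z, A2 x z = 1 := by
    rw [← pr_true (p := p) hsum, pr_fiber (fun _ => True) W]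
    refine Finset.sum_congr rfl fun x _ => ?_
    rw [pr_fiber (fun ω => True ∧ W ω = x) Z]
    exact Finset.sum_congr rfl fun z _ => pr_congr fun ω => by tauto
  have hT2D : ∀ x z, A2 x z ≠ 0 → T x z ^ 2 ≤ D x z := by
    intro x z hne
    have hA2pos : 0 < A2 x z := lt_of_le_of_ne (hA2nn x z) (Ne.symm hne)
    have hAx : 0 < pr p (fun ω => W ω = x) :=
      lt_of_lt_of_le hA2pos (pr_mono hp fun ω hw => hw.1)
    have habscont : ∀ y, Qx x y = 0 → Qxz x z y = 0 := by
      intro y hy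
      have hnum : pr p (fun ω => Y ω = y ∧ W ω = x) = 0 := by
        have := hy
        simp only [hQxdef, condDist, div_eq_zero_iff] at this
        rcases this with h | h
        · exact h
        · exact absurd h hAx.ne'
      have hnum2 : pr p (fun ω => Y ω = y ∧ (W ω = x ∧ Z ω = z)) = 0 :=
        pr_eq_zero_of_le hp (fun ω hw => ⟨hw.1, hw.2.1⟩) hnum
      simp [hQxzdef, condDist, hnum2]
    have hsumQx : ∑ y, Qx x y = 1 := by
      have : ∑ y, pr p (fun ω => Y ω = y ∧ W ω = x) = pr p (fun ω => W ω = x) := by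
        rw [pr_fiber (fun ω => W ω = x) Y]
        exact Finset.sum_congr rfl fun y _ => pr_congr fun ω => by tauto
      simp only [hQxdef, condDist]
      rw [← Finset.sum_div, this, div_self hAx.ne']
    have key : (∑ y, |Qxz x z y - Qx x y|) ^ 2
        ≤ (∑ y, Qx x y) * ∑ y, (Qxz x z y - Qx x y) ^ 2 / Qx x y := by
      refine Finset.sum_sq_le_sum_mul_sum_of_sq_eq_mul Finset.univ
        (fun y _ => condDist_nonneg hp Y _ y)
        (fun y _ => div_nonneg (sq_nonneg _) (condDist_nonneg hp Y _ y)) ?_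
      intro y _
      rw [sq_abs]
      by_cases hq : Qx x y = 0
      · rw [hq, habscont y hq]; simp
      · field_simp
    rw [hsumQx, one_mul] at key
    exact key
  have hSnn : 0 ≤ ∑ x, ∑ z, A2 x z * T x z :=
    Finset.sum_nonneg fun x _ => Finset.sum_nonneg fun z _ =>
      mul_nonneg (hA2nn x z) (hTnn x z)
  have hSsq : (∑ x, ∑ z, A2 x z * T x z) ^ 2 ≤ ε ^ 2 := by
    have hcs : (∑ q : 𝒳 × 𝒳, A2 q.1 q.2 * T q.1 q.2) ^ 2
        ≤ (∑ q : 𝒳 × 𝒳, A2 q.1 q.2) * ∑ q : 𝒳 × 𝒳, A2 q.1 q.2 * T q.1 q.2 ^ 2 := by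
      refine Finset.sum_sq_le_sum_mul_sum_of_sq_eq_mul Finset.univ
        (fun q _ => hA2nn q.1 q.2)
        (fun q _ => mul_nonneg (hA2nn q.1 q.2) (sq_nonneg _)) ?_
      intro q _; ring
    rw [Fintype.sum_prod_type, Fintype.sum_prod_type, Fintype.sum_prod_type] at hcs
    rw [hsumA2, one_mul] at hcs
    have hADle : ∑ x, ∑ z, A2 x z * T x z ^ 2 ≤ ε ^ 2 := by
      have h1 : ∑ x, ∑ z, A2 x z * T x z ^ 2 ≤ ∑ x, ∑ z, A2 x z * D x z := by
        refine Finset.sum_le_sum fun x _ => Finset.sum_le_sum fun z _ => ?_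
        by_cases hne : A2 x z = 0
        · simp [hne]
        · exact mul_le_mul_of_nonneg_left (hT2D x z hne) (hA2nn x z)
      exact le_trans h1 hCMI
    exact le_trans hcs hADle
  have hSle : ∑ x, ∑ z, A2 x z * T x z ≤ ε := by nlinarith [hSnn, hSsq]
  -- combine
  calc ∑ x, Lentropy L (fun y => pr p (fun ω => Y ω = y ∧ W ω = x))
      = ∑ x, ∑ z, A2 x z * Lentropy L (Qx x) := stepA
    _ ≤ ∑ x, ∑ z, (A2 x z * Lentropy L (Qxz x z) + M * (A2 x z * T x z)) :=
        Finset.sum_le_sum fun x _ => Finset.sum_le_sum fun z _ => stepB x z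
    _ = (∑ x, ∑ z, A2 x z * Lentropy L (Qxz x z)) + M * ∑ x, ∑ z, A2 x z * T x z := by
        simp [Finset.sum_add_distrib, Finset.mul_sum]
    _ ≤ (∑ z, Lentropy L (fun y => pr p (fun ω => Y ω = y ∧ Z ω = z)))
          + M * ∑ x, ∑ z, A2 x z * T x z := by
        exact add_le_add_left stepC _
    _ ≤ (∑ z, Lentropy L (fun y => pr p (fun ω => Y ω = y ∧ Z ω = z))) + M * ε :=
        add_le_add_right (mul_le_mul_of_nonneg_left hSle hM) _

end StepLemma

section AoILemmas
variable {Ω 𝒳 𝒴 𝒜 : Type*} [Fintype Ω] [Fintype 𝒳] [Fintype 𝒴] [Fintype 𝒜] [Nonempty 𝒜]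

lemma indep_event (p : Ω → ℝ) (hp : ∀ ω, 0 ≤ p ω) (Y : Ω → 𝒴) (X : ℕ → Ω → 𝒳) (n : ℕ)
    (Θ : Ω → ℕ)
    (hind : ∀ (θ : ℕ) (v : 𝒴 × (Fin (n + 1) → 𝒳)),
      pr p (fun ω => Θ ω = θ ∧ (Y ω, fun i => X i.1 ω) = v)
        = pr p (fun ω => Θ ω = θ)
            * pr p (fun ω => ((Y ω, fun i => X i.1 ω) : 𝒴 × (Fin (n + 1) → 𝒳)) = v))
    {θ : ℕ} (hθ : θ ≤ n) (y : 𝒴) (x : 𝒳) :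
    pr p (fun ω => Y ω = y ∧ (X θ ω = x ∧ Θ ω = θ))
      = pr p (fun ω => Θ ω = θ) * pr p (fun ω => Y ω = y ∧ X θ ω = x) := by
  classical
  set V : Ω → 𝒴 × (Fin (n + 1) → 𝒳) := fun ω => (Y ω, fun i => X i.1 ω) with hVdef
  set t : Fin (n + 1) := ⟨θ, Nat.lt_succ_of_le hθ⟩ with htdef
  have hV : ∀ (ω : Ω) (v : 𝒴 × (Fin (n + 1) → 𝒳)), V ω = v → Y ω = v.1 ∧ X θ ω = v.2 t := by
    intro ω v h
    refine ⟨congrArg Prod.fst h, ?_⟩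
    have := congrArg (fun w : 𝒴 × (Fin (n + 1) → 𝒳) => w.2 t) h
    exact this
  have hLHS : pr p (fun ω => Y ω = y ∧ (X θ ω = x ∧ Θ ω = θ))
      = ∑ v : 𝒴 × (Fin (n + 1) → 𝒳),
          (if v.1 = y ∧ v.2 t = x then pr p (fun ω => Θ ω = θ ∧ V ω = v) else 0) := by
    rw [pr_fiber (fun ω => Y ω = y ∧ (X θ ω = x ∧ Θ ω = θ)) V]
    refine Finset.sum_congr rfl fun v _ => ?_
    by_cases hv : v.1 = y ∧ v.2 t = x
    · rw [if_pos hv]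
      refine pr_congr fun ω => ?_
      constructor
      · rintro ⟨⟨_, _, h3⟩, h4⟩; exact ⟨h3, h4⟩
      · rintro ⟨h1, h2⟩
        obtain ⟨hy', hx'⟩ := hV ω v h2
        exact ⟨⟨hy'.trans hv.1, hx'.trans hv.2, h1⟩, h2⟩
    · rw [if_neg hv, ← pr_false (p := p)]
      refine pr_congr fun ω => ?_
      constructor
      · rintro ⟨⟨hy', hx', _⟩, h4⟩
        obtain ⟨hy'', hx''⟩ := hV ω v h4
        exact absurd ⟨hy''.symm.trans hy', hx''.symm.trans hx'⟩ hv
      · rintro ⟨⟩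
  have hRHS : pr p (fun ω => Y ω = y ∧ X θ ω = x)
      = ∑ v : 𝒴 × (Fin (n + 1) → 𝒳),
          (if v.1 = y ∧ v.2 t = x then pr p (fun ω => V ω = v) else 0) := by
    rw [pr_fiber (fun ω => Y ω = y ∧ X θ ω = x) V]
    refine Finset.sum_congr rfl fun v _ => ?_
    by_cases hv : v.1 = y ∧ v.2 t = x
    · rw [if_pos hv]
      refine pr_congr fun ω => ?_
      constructor
      · rintro ⟨_, h4⟩; exact h4
      · intro h2
        obtain ⟨hy', hx'⟩ := hV ω v h2
        exact ⟨⟨hy'.trans hv.1, hx'.trans hv.2⟩, h2⟩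
    · rw [if_neg hv, ← pr_false (p := p)]
      refine pr_congr fun ω => ?_
      constructor
      · rintro ⟨⟨hy', hx'⟩, h4⟩
        obtain ⟨hy'', hx''⟩ := hV ω v h4
        exact absurd ⟨hy''.symm.trans hy', hx''.symm.trans hx'⟩ hv
      · rintro ⟨⟩
  rw [hLHS, hRHS, Finset.mul_sum]
  refine Finset.sum_congr rfl fun v _ => ?_
  rw [hind θ v]
  split <;> simp [hVdef]

lemma AoI_eq (L : 𝒴 → 𝒜 → ℝ) (p : Ω → ℝ) (hp : ∀ ω, 0 ≤ p ω)
    (Y : Ω → 𝒴) (X : ℕ → Ω → 𝒳) (n : ℕ) (Θ : Ω → ℕ)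
    (hind : ∀ (θ : ℕ) (v : 𝒴 × (Fin (n + 1) → 𝒳)),
      pr p (fun ω => Θ ω = θ ∧ (Y ω, fun i => X i.1 ω) = v)
        = pr p (fun ω => Θ ω = θ)
            * pr p (fun ω => ((Y ω, fun i => X i.1 ω) : 𝒴 × (Fin (n + 1) → 𝒳)) = v)) :
    LcondEntropyAoI L p Y X Θ n
      = ∑ θ ∈ Finset.range (n + 1), pr p (fun ω => Θ ω = θ) *
          ∑ x, Lentropy L (fun y => pr p (fun ω => Y ω = y ∧ X θ ω = x)) := by
  unfold LcondEntropyAoI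
  refine Finset.sum_congr rfl fun θ hθ => ?_
  have hθn : θ ≤ n := Nat.lt_succ_iff.mp (Finset.mem_range.mp hθ)
  rw [Finset.mul_sum]
  refine Finset.sum_congr rfl fun x _ => ?_
  have h1 : pr p (fun ω => Θ ω = θ ∧ X θ ω = x)
      = pr p (fun ω => X θ ω = x ∧ Θ ω = θ) := pr_congr fun ω => by tauto
  rw [h1, Lentropy_condDist L p hp Y _]
  rw [show (fun y => pr p (fun ω => Y ω = y ∧ (X θ ω = x ∧ Θ ω = θ)))
      = fun y => pr p (fun ω => Θ ω = θ) * pr p (fun ω => Y ω = y ∧ X θ ω = x) from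
    funext fun y => indep_event p hp Y X n Θ hind hθn y x]
  exact Lentropy_smul L _ (pr_nonneg hp _) _

end AoILemmas

section AbelLemmas
variable {Ω : Type*} [Fintype Ω]

lemma abel_sum (n : ℕ) (P f : ℕ → ℝ) :
    ∑ θ ∈ range (n + 1), P θ * f θ
      = f 0 * (∑ θ ∈ range (n + 1), P θ)
        + ∑ k ∈ range n, (f (k + 1) - f k)
            * (∑ θ ∈ range (n + 1), if k < θ then P θ else 0) := by
  classical
  have h2 : ∑ k ∈ range n, (f (k + 1) - f k)
        * (∑ θ ∈ range (n + 1), if k < θ then P θ else 0)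
      = ∑ θ ∈ range (n + 1), P θ * (f θ - f 0) := by
    have := Finset.sum_comm (s := range n) (t := range (n + 1))
      (f := fun k θ => if k < θ then (f (k + 1) - f k) * P θ else 0)
    calc ∑ k ∈ range n, (f (k + 1) - f k)
          * (∑ θ ∈ range (n + 1), if k < θ then P θ else 0)
        = ∑ k ∈ range n, ∑ θ ∈ range (n + 1),
            (if k < θ then (f (k + 1) - f k) * P θ else 0) := by
          refine Finset.sum_congr rfl fun k _ => ?_
          rw [Finset.mul_sum]
          exact Finset.sum_congr rfl fun θ _ => by split <;> simp
      _ = ∑ θ ∈ range (n + 1), ∑ k ∈ range n,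
            (if k < θ then (f (k + 1) - f k) * P θ else 0) := this
      _ = ∑ θ ∈ range (n + 1), P θ * (f θ - f 0) := by
          refine Finset.sum_congr rfl fun θ hθ => ?_
          have hθn : θ ≤ n := Nat.lt_succ_iff.mp (Finset.mem_range.mp hθ)
          have hsub : ∑ k ∈ range n, (if k < θ then (f (k + 1) - f k) * P θ else 0)
              = ∑ k ∈ range θ, (if k < θ then (f (k + 1) - f k) * P θ else 0) := by
            refine (Finset.sum_subset (Finset.range_subset_range.mpr hθn) fun k _ hk => ?_).symm
            rw [if_neg]
            exact fun hlt => hk (Finset.mem_range.mpr hlt)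
          rw [hsub]
          have : ∑ k ∈ range θ, (if k < θ then (f (k + 1) - f k) * P θ else 0)
              = ∑ k ∈ range θ, (f (k + 1) - f k) * P θ := by
            refine Finset.sum_congr rfl fun k hk => if_pos (Finset.mem_range.mp hk)
          rw [this, ← Finset.sum_mul, Finset.sum_range_sub f θ]
          ring
  rw [h2, Finset.mul_sum, ← Finset.sum_add_distrib]
  exact Finset.sum_congr rfl fun θ _ => by ring

lemma tail_eq (p : Ω → ℝ) (Θ : Ω → ℕ) (n : ℕ) (hΘ : ∀ ω, Θ ω ≤ n) (k : ℕ) :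
    ∑ θ ∈ range (n + 1), (if k < θ then pr p (fun ω => Θ ω = θ) else 0)
      = pr p (fun ω => k < Θ ω) := by
  classical
  rw [pr_fiber_nat (fun ω => k < Θ ω) Θ n hΘ]
  refine Finset.sum_congr rfl fun θ _ => ?_
  by_cases hk : k < θ
  · rw [if_pos hk]
    refine pr_congr fun ω => ?_
    constructor
    · intro h; exact ⟨h ▸ hk, h⟩
    · rintro ⟨_, h⟩; exact h
  · rw [if_neg hk, ← pr_false (p := p)]
    refine pr_congr fun ω => ?_
    constructor
    · rintro ⟨⟩
    · rintro ⟨h1, h2⟩; exact hk (h2 ▸ h1)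

lemma exp_eq (p : Ω → ℝ) (Θ : Ω → ℕ) (n : ℕ) (hΘ : ∀ ω, Θ ω ≤ n) :
    ∑ ω, p ω * (Θ ω : ℝ)
      = ∑ θ ∈ range (n + 1), (θ : ℝ) * pr p (fun ω => Θ ω = θ) := by
  classical
  have h1 : ∑ θ ∈ range (n + 1), (θ : ℝ) * pr p (fun ω => Θ ω = θ)
      = ∑ θ ∈ range (n + 1), ∑ ω, (if Θ ω = θ then (θ : ℝ) * p ω else 0) := by
    refine Finset.sum_congr rfl fun θ _ => ?_
    simp only [pr]
    rw [Finset.mul_sum]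
    exact Finset.sum_congr rfl fun ω _ => by split <;> ring
  rw [h1, Finset.sum_comm]
  refine Finset.sum_congr rfl fun ω _ => ?_
  have hmem : Θ ω ∈ range (n + 1) := Finset.mem_range.mpr (Nat.lt_succ_of_le (hΘ ω))
  rw [Finset.sum_ite_eq (range (n + 1)) (Θ ω) (fun θ => (θ : ℝ) * p ω), if_pos hmem]
  ring

lemma total_eq (p : Ω → ℝ) (hsum : ∑ ω, p ω = 1) (Θ : Ω → ℕ) (n : ℕ) (hΘ : ∀ ω, Θ ω ≤ n) :
    ∑ θ ∈ range (n + 1), pr p (fun ω => Θ ω = θ) = 1 := by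
  rw [← pr_true (p := p) hsum, pr_fiber_nat (fun _ => True) Θ n hΘ]
  exact Finset.sum_congr rfl fun θ _ => pr_congr fun ω => by tauto

end AbelLemmas

/-- Theorem 2, quantitative version.  Under the ε-Markov
condition, if `Θ₁ ≤_st Θ₂` and both are independent of `(Y, X_0, …, X_n)`, then
`H_L(Y|X_{Θ₁},Θ₁) ≤ H_L(Y|X_{Θ₂},Θ₂) + 2Mε|𝒳| E[Θ₂]`. -/
theorem freshness_aware_condEntropy_stochastic_order {Ω 𝒳 𝒴 𝒜 : Type*} [Fintype Ω]
    [Fintype 𝒳] [Fintype 𝒴] [Fintype 𝒜] [Nonempty 𝒜]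
    (L : 𝒴 → 𝒜 → ℝ) (M : ℝ) (hL : ∀ y a, |L y a| ≤ M)
    (p : Ω → ℝ) (hp : ∀ ω, 0 ≤ p ω) (hsum : ∑ ω, p ω = 1)
    (Y : Ω → 𝒴) (X : ℕ → Ω → 𝒳) (n : ℕ)
    (ε : ℝ) (hε : 0 ≤ ε)
    (hMarkov : ∀ k < n, chiSqCMI p Y (X (k + 1)) (X k) ≤ ε ^ 2)
    (Θ₁ Θ₂ : Ω → ℕ) (hΘ₁ : ∀ ω, Θ₁ ω ≤ n) (hΘ₂ : ∀ ω, Θ₂ ω ≤ n)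
    (hind₁ : ∀ (θ : ℕ) (v : 𝒴 × (Fin (n + 1) → 𝒳)),
      pr p (fun ω => Θ₁ ω = θ ∧ (Y ω, fun i => X i.1 ω) = v)
        = pr p (fun ω => Θ₁ ω = θ)
            * pr p (fun ω => ((Y ω, fun i => X i.1 ω) : 𝒴 × (Fin (n + 1) → 𝒳)) = v))
    (hind₂ : ∀ (θ : ℕ) (v : 𝒴 × (Fin (n + 1) → 𝒳)),
      pr p (fun ω => Θ₂ ω = θ ∧ (Y ω, fun i => X i.1 ω) = v)
        = pr p (fun ω => Θ₂ ω = θ)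
            * pr p (fun ω => ((Y ω, fun i => X i.1 ω) : 𝒴 × (Fin (n + 1) → 𝒳)) = v))
    (hst : ∀ k : ℕ, pr p (fun ω => k < Θ₁ ω) ≤ pr p (fun ω => k < Θ₂ ω)) :
    LcondEntropyAoI L p Y X Θ₁ n
      ≤ LcondEntropyAoI L p Y X Θ₂ n
        + 2 * M * ε * (Fintype.card 𝒳 : ℝ) * (∑ ω, p ω * (Θ₂ ω : ℝ)) := by
  classical
  have hΩ : Nonempty Ω := by
    by_contra hc
    rw [not_nonempty_iff] at hc
    simp at hsum
  obtain ⟨ω0⟩ := hΩ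
  have hM : 0 ≤ M := le_trans (abs_nonneg _) (hL (Y ω0) (Classical.arbitrary 𝒜))
  have h𝒳 : Nonempty 𝒳 := ⟨X 0 ω0⟩
  have hcard : (1 : ℝ) ≤ (Fintype.card 𝒳 : ℝ) := by exact_mod_cast Fintype.card_pos
  have hMεC : M * ε ≤ 2 * M * ε * (Fintype.card 𝒳 : ℝ) := by
    nlinarith [mul_nonneg hM hε]
  set C : ℝ := 2 * M * ε * (Fintype.card 𝒳 : ℝ) with hCdef
  have hCnn : 0 ≤ C := le_trans (mul_nonneg hM hε) hMεC
  rw [AoI_eq L p hp Y X n Θ₁ hind₁, AoI_eq L p hp Y X n Θ₂ hind₂,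
    exp_eq p Θ₂ n hΘ₂]
  set h : ℕ → ℝ :=
    fun θ => ∑ x, Lentropy L (fun y => pr p (fun ω => Y ω = y ∧ X θ ω = x)) with hhdef
  set P₁ : ℕ → ℝ := fun θ => pr p (fun ω => Θ₁ ω = θ) with hP₁def
  set P₂ : ℕ → ℝ := fun θ => pr p (fun ω => Θ₂ ω = θ) with hP₂def
  set f : ℕ → ℝ := fun θ => h θ + C * θ with hfdef
  have hstep : ∀ k, k < n → h k ≤ h (k + 1) + C := by
    intro k hk
    have h1 : h k ≤ h (k + 1) + M * ε :=
      step_lemma L M hL hM p hp hsum Y (X k) (X (k + 1)) ε hε (hMarkov k hk)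
    linarith
  have hd : ∀ k ∈ range n, 0 ≤ f (k + 1) - f k := by
    intro k hk
    have := hstep k (Finset.mem_range.mp hk)
    simp only [hfdef]
    push_cast
    linarith
  have hsum₁ : ∑ θ ∈ range (n + 1), P₁ θ = 1 := total_eq p hsum Θ₁ n hΘ₁
  have hsum₂ : ∑ θ ∈ range (n + 1), P₂ θ = 1 := total_eq p hsum Θ₂ n hΘ₂
  have key : ∑ θ ∈ range (n + 1), P₁ θ * f θ ≤ ∑ θ ∈ range (n + 1), P₂ θ * f θ := by
    rw [abel_sum n P₁ f, abel_sum n P₂ f, hsum₁, hsum₂]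
    refine add_le_add_right (Finset.sum_le_sum fun k hk => ?_) _
    refine mul_le_mul_of_nonneg_left ?_ (by linarith [hd k hk])
    rw [tail_eq p Θ₁ n hΘ₁ k, tail_eq p Θ₂ n hΘ₂ k]
    exact hst k
  have expand : ∀ (P : ℕ → ℝ),
      ∑ θ ∈ range (n + 1), P θ * f θ
        = (∑ θ ∈ range (n + 1), P θ * h θ) + C * ∑ θ ∈ range (n + 1), (θ : ℝ) * P θ := by
    intro P
    rw [Finset.mul_sum, ← Finset.sum_add_distrib]
    refine Finset.sum_congr rfl fun θ _ => ?_
    simp only [hfdef]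
    ring
  have e₁nn : 0 ≤ ∑ θ ∈ range (n + 1), (θ : ℝ) * P₁ θ :=
    Finset.sum_nonneg fun θ _ => mul_nonneg (Nat.cast_nonneg θ) (pr_nonneg hp _)
  have h1 := expand P₁
  have h2 := expand P₂
  have hCe₁ : 0 ≤ C * ∑ θ ∈ range (n + 1), (θ : ℝ) * P₁ θ := mul_nonneg hCnn e₁nn
  linarith
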